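/- Let U ∈ ℝ^{N×d}, V ∈ ℝ^{d×d} symmetric positive semidefinite with u_iᵀ V u_j ≥ 0 for all i ≠ j, and α_{ij} ≥ 0 symmetric (α_{ij} = α_{ji}). With M₁ = Diag(α_{ii} u_iᵀ V u_i), M₂(i,j) = −α_{ij} u_iᵀ V u_j for i ≠ j (zero diagonal), M₃ = Diag(Σ_{j≠i} α_{ij} u_iᵀ V u_j), and weight matrix W(i,j) = α_{ij} u_iᵀ V u_j for i ≠ j (zero diagonal), the matrix M := M₁ + M₂ + M₃ is positive definite if and only if every connected component of the graph on {1,…,N} with edges {(i,j) : i ≠ j, W(i,j) > 0} contains at least one vertex i with α_{ii} u_iᵀ V u_i > 0. -/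

import Mathlib

open Matrix BigOperators

lemma quadform_aux (N : ℕ) (w : Fin N → Fin N → ℝ) (hws : ∀ i j, w i j = w j i)
    (c x : Fin N → ℝ) :
    x ⬝ᵥ (Matrix.diagonal c + Matrix.of (fun i j => -(w i j))
        + Matrix.diagonal (fun i => ∑ j, w i j)).mulVec x
      = ∑ i, c i * x i ^ 2 + (1/2) * ∑ i, ∑ j, w i j * (x i - x j) ^ 2 := by
  have key : ∑ i, ∑ j, w i j * x j ^ 2 = ∑ i, ∑ j, w i j * x i ^ 2 := by
    rw [Finset.sum_comm]
    exact Finset.sum_congr rfl fun a _ => Finset.sum_congr rfl fun b _ => by rw [hws]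
  have h2 : (1/2 : ℝ) * ∑ i, ∑ j, w i j * (x i - x j) ^ 2
      = (∑ i, ∑ j, w i j * x i ^ 2) - ∑ i, ∑ j, w i j * (x i * x j) := by
    have expand : ∑ i, ∑ j, w i j * (x i - x j) ^ 2
        = (∑ i, ∑ j, w i j * x i ^ 2) - 2 * (∑ i, ∑ j, w i j * (x i * x j))
          + ∑ i, ∑ j, w i j * x j ^ 2 := by
      simp only [Finset.mul_sum, ← Finset.sum_sub_distrib, ← Finset.sum_add_distrib]
      exact Finset.sum_congr rfl fun a _ => Finset.sum_congr rfl fun b _ => by ring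
    rw [expand, key]; ring
  rw [h2]
  have a1 : ∑ i, x i * (c i * x i) = ∑ i, c i * x i ^ 2 :=
    Finset.sum_congr rfl fun a _ => by ring
  have a2 : ∑ i, x i * ((∑ j, w i j) * x i) = ∑ i, ∑ j, w i j * x i ^ 2 := by
    refine Finset.sum_congr rfl fun a _ => ?_
    rw [Finset.sum_mul, Finset.mul_sum]
    exact Finset.sum_congr rfl fun b _ => by ring
  have a3 : ∑ i, ∑ j, x i * (w i j * x j) = ∑ i, ∑ j, w i j * (x i * x j) :=
    Finset.sum_congr rfl fun a _ => Finset.sum_congr rfl fun b _ => by ring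
  have h1 : x ⬝ᵥ (Matrix.diagonal c + Matrix.of (fun i j => -(w i j))
        + Matrix.diagonal (fun i => ∑ j, w i j)).mulVec x
      = (∑ i, c i * x i ^ 2) + ((∑ i, ∑ j, w i j * x i ^ 2) - ∑ i, ∑ j, w i j * (x i * x j)) := by
    simp only [dotProduct, mulVec, Matrix.add_apply, Matrix.diagonal_apply, Matrix.of_apply,
      add_mul, neg_mul, mul_add, mul_neg, mul_ite, ite_mul, zero_mul, mul_zero,
      Finset.sum_ite_eq, Finset.mem_univ, if_true, Finset.sum_add_distrib, Finset.mul_sum,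
      Finset.sum_sub_distrib, Finset.sum_neg_distrib]
    rw [a1, a3, ← a2]
    ring
  rw [h1]

/-- `M = M₁ + M₂ + M₃` is positive definite (i.e. `xᵀ M x > 0` for all
`x ≠ 0`) if and only if every connected component of the similarity graph
(edges: `i ≠ j` with `α i j * ⟨u i, u j⟩_V > 0`) contains a vertex `j` with
`α j j * ⟨u j, u j⟩_V > 0`. -/
theorem attributeElasticity_posDef_iff_component_condition
    (N d : ℕ) (U : Matrix (Fin N) (Fin d) ℝ)
    (V : Matrix (Fin d) (Fin d) ℝ) (hV : V.PosSemidef)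
    (hVcross : ∀ i j, i ≠ j → 0 ≤ U i ⬝ᵥ V.mulVec (U j))
    (α : Fin N → Fin N → ℝ) (hα : ∀ i j, 0 ≤ α i j)
    (hαsymm : ∀ i j, α i j = α j i)
    (M₁ M₂ M₃ : Matrix (Fin N) (Fin N) ℝ)
    (hM₁ : M₁ = Matrix.diagonal fun i => α i i * (U i ⬝ᵥ V.mulVec (U i)))
    (hM₂ : ∀ i j, M₂ i j = if i = j then 0 else -(α i j * (U i ⬝ᵥ V.mulVec (U j))))
    (hM₃ : M₃ = Matrix.diagonal fun i =>
      ∑ j ∈ Finset.univ.erase i, α i j * (U i ⬝ᵥ V.mulVec (U j))) :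
    (∀ x : Fin N → ℝ, x ≠ 0 → 0 < x ⬝ᵥ (M₁ + M₂ + M₃).mulVec x) ↔
      (∀ i : Fin N, ∃ j : Fin N,
        Relation.ReflTransGen
          (fun a b => a ≠ b ∧ 0 < α a b * (U a ⬝ᵥ V.mulVec (U b))) i j ∧
        0 < α j j * (U j ⬝ᵥ V.mulVec (U j))) := by
  classical
  set ip : Fin N → Fin N → ℝ := fun i j => U i ⬝ᵥ V.mulVec (U j) with hip
  have hipsymm : ∀ i j, ip i j = ip j i := by
    intro i j
    have hVt : Vᵀ = V := by
      have := hV.1.eq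
      simpa [Matrix.IsHermitian, Matrix.conjTranspose_eq_transpose_of_trivial] using this
    show U i ⬝ᵥ V.mulVec (U j) = U j ⬝ᵥ V.mulVec (U i)
    rw [dotProduct_mulVec, ← mulVec_transpose, hVt, dotProduct_comm]
  set w : Fin N → Fin N → ℝ := fun i j => if i = j then 0 else α i j * ip i j with hwdef
  set c : Fin N → ℝ := fun i => α i i * ip i i with hcdef
  set r : Fin N → Fin N → Prop := fun a b => a ≠ b ∧ 0 < α a b * (U a ⬝ᵥ V.mulVec (U b)) with hrdef
  have hwsymm : ∀ i j, w i j = w j i := by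
    intro i j
    simp only [hwdef]
    rcases eq_or_ne i j with h | h
    · simp [h]
    · simp [h, h.symm, hαsymm i j, hipsymm i j]
  have hwnn : ∀ i j, 0 ≤ w i j := by
    intro i j
    simp only [hwdef]
    rcases eq_or_ne i j with h | h
    · simp [h]
    · simp only [h, if_false]
      exact mul_nonneg (hα i j) (hVcross i j h)
  have hcnn : ∀ i, 0 ≤ c i := by
    intro i
    refine mul_nonneg (hα i i) ?_
    have := hV.dotProduct_mulVec_nonneg (U i)
    simpa using this
  have hrw : ∀ a b, r a b ↔ 0 < w a b := by
    intro a b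
    simp only [hrdef, hwdef]
    rcases eq_or_ne a b with h | h
    · simp [h]
    · simp [h, hip]
  -- matrix identification
  have hM : M₁ + M₂ + M₃ = Matrix.diagonal c + Matrix.of (fun i j => -(w i j))
      + Matrix.diagonal (fun i => ∑ j, w i j) := by
    have hM₂' : M₂ = Matrix.of (fun i j => -(w i j)) := by
      ext i j
      rw [hM₂ i j]
      simp only [Matrix.of_apply, hwdef]
      rcases eq_or_ne i j with h | h
      · simp [h]
      · simp [h, hip]
    have hsum : ∀ i, ∑ j ∈ Finset.univ.erase i, α i j * (U i ⬝ᵥ V.mulVec (U j))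
        = ∑ j, w i j := by
      intro i
      rw [← Finset.sum_erase Finset.univ (by simp [hwdef] : w i i = 0)]
      refine Finset.sum_congr rfl fun j hj => ?_
      have hji : j ≠ i := Finset.ne_of_mem_erase hj
      simp [hwdef, hji.symm, hip]
    have hM₃' : M₃ = Matrix.diagonal (fun i => ∑ j, w i j) := by
      rw [hM₃]
      exact congrArg Matrix.diagonal (funext hsum)
    rw [hM₁, hM₂', hM₃']
  have hquad : ∀ x : Fin N → ℝ, x ⬝ᵥ (M₁ + M₂ + M₃).mulVec x
      = ∑ i, c i * x i ^ 2 + (1/2) * ∑ i, ∑ j, w i j * (x i - x j) ^ 2 := by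
    intro x
    rw [hM]
    exact quadform_aux N w hwsymm c x
  constructor
  · -- PD → component condition
    intro hPD i
    by_contra hcon
    push_neg at hcon
    set x : Fin N → ℝ := fun k => if Relation.ReflTransGen r i k then 1 else 0 with hxdef
    have hxi : x i = 1 := by
      simp only [hxdef]
      exact if_pos Relation.ReflTransGen.refl
    have hxne : x ≠ 0 := by
      intro h0
      have := congrFun h0 i
      rw [hxi] at this
      norm_num at this
    have hpos := hPD x hxne
    rw [hquad x] at hpos
    have ht1 : ∑ k, c k * x k ^ 2 = 0 := by
      refine Finset.sum_eq_zero fun k _ => ?_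
      by_cases hk : Relation.ReflTransGen r i k
      · have hck : c k = 0 := le_antisymm (hcon k hk) (hcnn k)
        rw [hck, zero_mul]
      · simp [hxdef, hk]
    have ht2 : ∑ k, ∑ l, w k l * (x k - x l) ^ 2 = 0 := by
      refine Finset.sum_eq_zero fun k _ => Finset.sum_eq_zero fun l _ => ?_
      by_cases hk : Relation.ReflTransGen r i k
      · by_cases hl : Relation.ReflTransGen r i l
        · simp [hxdef, hk, hl]
        · have hw0 : w k l = 0 := by
            by_contra hne
            have hpos' : 0 < w k l := lt_of_le_of_ne (hwnn k l) (Ne.symm hne)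
            exact hl (hk.tail ((hrw k l).mpr hpos'))
          rw [hw0, zero_mul]
      · by_cases hl : Relation.ReflTransGen r i l
        · have hw0 : w l k = 0 := by
            by_contra hne
            have hpos' : 0 < w l k := lt_of_le_of_ne (hwnn l k) (Ne.symm hne)
            exact hk (hl.tail ((hrw l k).mpr hpos'))
          rw [hwsymm k l, hw0, zero_mul]
        · simp [hxdef, hk, hl]
    rw [ht1, ht2] at hpos
    norm_num at hpos
  · -- component condition → PD
    intro hcomp x hx
    rw [hquad x]
    have ht1nn : 0 ≤ ∑ k, c k * x k ^ 2 :=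
      Finset.sum_nonneg fun k _ => mul_nonneg (hcnn k) (sq_nonneg _)
    have ht2nn : 0 ≤ ∑ k, ∑ l, w k l * (x k - x l) ^ 2 :=
      Finset.sum_nonneg fun k _ => Finset.sum_nonneg fun l _ =>
        mul_nonneg (hwnn k l) (sq_nonneg _)
    by_contra hnp
    push_neg at hnp
    have ht1 : ∑ k, c k * x k ^ 2 = 0 := by nlinarith
    have ht2 : ∑ k, ∑ l, w k l * (x k - x l) ^ 2 = 0 := by nlinarith
    have ht1' : ∀ k : Fin N, c k * x k ^ 2 = 0 := by
      have := (Finset.sum_eq_zero_iff_of_nonneg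
        (fun k _ => mul_nonneg (hcnn k) (sq_nonneg (x k)))).mp ht1
      exact fun k => this k (Finset.mem_univ k)
    have ht2' : ∀ k l : Fin N, w k l * (x k - x l) ^ 2 = 0 := by
      have h1 := (Finset.sum_eq_zero_iff_of_nonneg
        (fun k _ => Finset.sum_nonneg fun l _ =>
          mul_nonneg (hwnn k l) (sq_nonneg (x k - x l)))).mp ht2
      intro k l
      have h2 := (Finset.sum_eq_zero_iff_of_nonneg
        (fun l _ => mul_nonneg (hwnn k l) (sq_nonneg (x k - x l)))).mp
        (h1 k (Finset.mem_univ k))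
      exact h2 l (Finset.mem_univ l)
    have hconst : ∀ a b : Fin N, Relation.ReflTransGen r a b → x a = x b := by
      intro a b hab
      induction hab with
      | refl => rfl
      | tail _ hstep ih =>
        rename_i m b' _
        have hwpos : 0 < w m b' := (hrw m b').mp hstep
        have hz := ht2' m b'
        have hsq : (x m - x b') ^ 2 = 0 := by
          rcases mul_eq_zero.mp hz with h | h
          · exact absurd h (ne_of_gt hwpos)
          · exact h
        have hmb : x m = x b' :=
          sub_eq_zero.mp ((pow_eq_zero_iff (two_ne_zero)).mp hsq)
        exact ih.trans hmb
    obtain ⟨i, hxi⟩ := Function.ne_iff.mp hx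
    obtain ⟨j, hreach, hcj⟩ := hcomp i
    have hxj : x j = x i := (hconst i j hreach).symm
    have hxj0 : x j ≠ 0 := by
      rw [hxj]; simpa using hxi
    have : c j * x j ^ 2 = 0 := ht1' j
    have hcjpos : 0 < c j := hcj
    have hx2 : 0 < x j ^ 2 := by positivity
    nlinarith
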